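/- Let γ > 0 and t ∈ ℝ, and let G be a centered real Gaussian random variable with variance γ². Then E[ erf(t + G) ] = erf( t / √(1 + 2γ²) ). -/

import Mathlib

open MeasureTheory ProbabilityTheory Real
open scoped NNReal ENNReal

noncomputable def erf (u : ℝ) : ℝ := 2 / Real.sqrt Real.pi * ∫ r in (0:ℝ)..u, Real.exp (-r ^ 2)

lemma cont_gauss : Continuous fun r : ℝ => Real.exp (-r ^ 2) := by continuity

lemma hasDerivAt_erf (u : ℝ) :
    HasDerivAt erf (2 / Real.sqrt Real.pi * Real.exp (-u ^ 2)) u := by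
  have h := intervalIntegral.integral_hasDerivAt_right
    (f := fun r : ℝ => Real.exp (-r ^ 2)) (a := 0) (b := u)
    (cont_gauss.intervalIntegrable _ _)
    (cont_gauss.stronglyMeasurableAtFilter _ _)
    cont_gauss.continuousAt
  exact h.const_mul (2 / Real.sqrt Real.pi)

lemma continuous_erf : Continuous erf :=
  continuous_iff_continuousAt.2 fun u => (hasDerivAt_erf u).continuousAt

lemma integrable_gauss : Integrable (fun r : ℝ => Real.exp (-r ^ 2)) := by
  simpa using integrable_exp_neg_mul_sq (b := (1:ℝ)) one_pos

lemma abs_erf_le (u : ℝ) : |erf u| ≤ 2 := by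
  have h1 : |∫ r in (0:ℝ)..u, Real.exp (-r ^ 2)| ≤ Real.sqrt Real.pi := by
    rw [← Real.norm_eq_abs]
    calc ‖∫ r in (0:ℝ)..u, Real.exp (-r ^ 2)‖
        ≤ ∫ r in Set.uIoc 0 u, ‖Real.exp (-r ^ 2)‖ :=
          intervalIntegral.norm_integral_le_integral_norm_uIoc
      _ = ∫ r in Set.uIoc 0 u, Real.exp (-r ^ 2) := by
          simp [Real.norm_eq_abs, abs_of_pos (Real.exp_pos _)]
      _ ≤ ∫ r : ℝ, Real.exp (-r ^ 2) :=
          setIntegral_le_integral integrable_gauss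
            (Filter.Eventually.of_forall fun r => (Real.exp_pos _).le)
      _ = Real.sqrt Real.pi := by
          simpa using integral_gaussian 1
  have hpi : (0:ℝ) < Real.sqrt Real.pi := Real.sqrt_pos.2 Real.pi_pos
  have : |erf u| ≤ 2 / Real.sqrt Real.pi * Real.sqrt Real.pi := by
    rw [erf, abs_mul, abs_of_pos (by positivity : (0:ℝ) < 2 / Real.sqrt Real.pi)]
    exact mul_le_mul_of_nonneg_left h1 (by positivity)
  rwa [div_mul_cancel₀] at this
  exact hpi.ne'

lemma erf_neg (u : ℝ) : erf (-u) = - erf u := by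
  have h : (∫ r in (0:ℝ)..(-u), Real.exp (-r ^ 2))
      = - ∫ r in (0:ℝ)..u, Real.exp (-r ^ 2) := by
    have := intervalIntegral.integral_comp_neg (a := (0:ℝ)) (b := u)
      (fun r => Real.exp (-r ^ 2))
    simp only [neg_zero, neg_neg, neg_sq] at this
    rw [intervalIntegral.integral_symm, ← this]
  simp [erf, h]

lemma erf_zero : erf 0 = 0 := by simp [erf]


lemma gauss_conv (v t : ℝ) (hv : 0 < v) :
    ∫ x : ℝ, Real.exp (-(t + x) ^ 2) *
        ((Real.sqrt (2 * Real.pi * v))⁻¹ * Real.exp (-x ^ 2 / (2 * v)))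
      = (Real.sqrt (1 + 2 * v))⁻¹ * Real.exp (-t ^ 2 / (1 + 2 * v)) := by
  set b : ℝ := 1 + 1 / (2 * v) with hb_def
  have hb : 0 < b := by positivity
  have hstep : ∀ x : ℝ,
      Real.exp (-(t + x) ^ 2) *
          ((Real.sqrt (2 * Real.pi * v))⁻¹ * Real.exp (-x ^ 2 / (2 * v)))
        = ((Real.sqrt (2 * Real.pi * v))⁻¹ * Real.exp (t ^ 2 / b - t ^ 2)) *
            Real.exp (-b * (x + t / b) ^ 2) := by
    intro x
    have hb' : b ≠ 0 := hb.ne'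
    have key : Real.exp (-(t + x) ^ 2) * Real.exp (-x ^ 2 / (2 * v))
        = Real.exp (t ^ 2 / b - t ^ 2) * Real.exp (-b * (x + t / b) ^ 2) := by
      rw [← Real.exp_add, ← Real.exp_add]
      congr 1
      have hb'' : 1 + 1 / (2 * v) ≠ 0 := hb_def ▸ hb'
      rw [hb_def]
      field_simp
      ring
    calc Real.exp (-(t + x) ^ 2) *
          ((Real.sqrt (2 * Real.pi * v))⁻¹ * Real.exp (-x ^ 2 / (2 * v)))
        = (Real.sqrt (2 * Real.pi * v))⁻¹ *
            (Real.exp (-(t + x) ^ 2) * Real.exp (-x ^ 2 / (2 * v))) := by ring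
      _ = (Real.sqrt (2 * Real.pi * v))⁻¹ *
            (Real.exp (t ^ 2 / b - t ^ 2) * Real.exp (-b * (x + t / b) ^ 2)) := by rw [key]
      _ = ((Real.sqrt (2 * Real.pi * v))⁻¹ * Real.exp (t ^ 2 / b - t ^ 2)) *
            Real.exp (-b * (x + t / b) ^ 2) := by ring
  rw [funext hstep, integral_const_mul,
    integral_add_right_eq_self (fun x => Real.exp (-b * x ^ 2)) (t / b),
    integral_gaussian]
  have hexp : t ^ 2 / b - t ^ 2 = -t ^ 2 / (1 + 2 * v) := by
    rw [hb_def]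
    have h1 : (1:ℝ) + 2 * v ≠ 0 := by positivity
    field_simp
    ring
  have hsqrt : (Real.sqrt (2 * Real.pi * v))⁻¹ * Real.sqrt (Real.pi / b)
      = (Real.sqrt (1 + 2 * v))⁻¹ := by
    have h2 : 2 * Real.pi * v = (1 + 2 * v) * (Real.pi / b) := by
      rw [hb_def]
      field_simp
      ring
    rw [h2, Real.sqrt_mul (by positivity), mul_inv, mul_assoc,
      inv_mul_cancel₀ (by positivity : Real.sqrt (Real.pi / b) ≠ 0), mul_one]
  rw [hexp, mul_right_comm, hsqrt]

lemma hasDerivAt_int_erf (μ : Measure ℝ) [IsProbabilityMeasure μ] (t : ℝ) :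
    HasDerivAt (fun t => ∫ x, erf (t + x) ∂μ)
      (∫ x, 2 / Real.sqrt Real.pi * Real.exp (-(t + x) ^ 2) ∂μ) t := by
  have hπ : (0:ℝ) < 2 / Real.sqrt Real.pi := by
    have := Real.sqrt_pos.2 Real.pi_pos
    positivity
  have hcont : ∀ s : ℝ, Continuous fun x : ℝ => erf (s + x) := fun s =>
    continuous_erf.comp (continuous_const.add continuous_id)
  have hcont' : ∀ s : ℝ, Continuous fun x : ℝ =>
      2 / Real.sqrt Real.pi * Real.exp (-(s + x) ^ 2) := fun s => by continuity
  have h := hasDerivAt_integral_of_dominated_loc_of_deriv_le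
      (μ := μ) (x₀ := t)
      (F := fun s x => erf (s + x))
      (F' := fun s x => 2 / Real.sqrt Real.pi * Real.exp (-(s + x) ^ 2))
      (bound := fun _ => 2 / Real.sqrt Real.pi) Filter.univ_mem
      (Filter.Eventually.of_forall fun s => (hcont s).aestronglyMeasurable)
      ?_ ((hcont' t).aestronglyMeasurable) ?_ (integrable_const _) ?_
  · exact h.2
  · refine (integrable_const (2:ℝ)).mono' ((hcont t).aestronglyMeasurable)
      (Filter.Eventually.of_forall fun x => ?_)
    simpa [Real.norm_eq_abs] using abs_erf_le (t + x)
  · refine Filter.Eventually.of_forall fun a => fun s _ => ?_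
    rw [Real.norm_eq_abs, abs_of_pos (by positivity)]
    have : Real.exp (-(s + a) ^ 2) ≤ 1 :=
      Real.exp_le_one_iff.2 (neg_nonpos.2 (sq_nonneg _))
    calc 2 / Real.sqrt Real.pi * Real.exp (-(s + a) ^ 2)
        ≤ 2 / Real.sqrt Real.pi * 1 := by nlinarith
      _ = 2 / Real.sqrt Real.pi := mul_one _
  · refine Filter.Eventually.of_forall fun a => fun s _ => ?_
    have h1 := (hasDerivAt_erf (s + a)).comp s ((hasDerivAt_id s).add_const a)
    simpa [Function.comp_def] using h1

lemma integral_gaussianReal_expand {v : ℝ≥0} (hv : v ≠ 0) (g : ℝ → ℝ) :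
    ∫ x, g x ∂(gaussianReal 0 v) = ∫ x, gaussianPDFReal 0 v x * g x := by
  rw [gaussianReal_of_var_ne_zero _ hv]
  have heq : gaussianPDF 0 v
      = fun x => ((Real.toNNReal (gaussianPDFReal 0 v x) : ℝ≥0) : ℝ≥0∞) := rfl
  rw [heq, integral_withDensity_eq_integral_smul
    ((measurable_gaussianPDFReal 0 v).real_toNNReal) g]
  congr 1
  funext x
  rw [NNReal.smul_def, smul_eq_mul, Real.coe_toNNReal _ (gaussianPDFReal_nonneg 0 v x)]

lemma int_erf_zero (v : ℝ≥0) : ∫ x, erf x ∂(gaussianReal 0 v) = 0 := by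
  have hone : (NNReal.mk ((-1:ℝ)^2) (sq_nonneg _)) = 1 := by ext; norm_num
  have hmap := gaussianReal_map_const_mul (μ := 0) (v := v) (-1)
  rw [hone, one_mul, mul_zero] at hmap
  have h1 : ∫ x, erf x ∂(gaussianReal 0 v)
      = ∫ x, erf ((-1) * x) ∂(gaussianReal 0 v) := by
    conv_lhs => rw [← hmap]
    rw [integral_map (by fun_prop) continuous_erf.aestronglyMeasurable]
  have h2 : ∫ x, erf ((-1) * x) ∂(gaussianReal 0 v)
      = - ∫ x, erf x ∂(gaussianReal 0 v) := by
    rw [← integral_neg]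
    congr 1
    funext x
    rw [neg_one_mul, erf_neg]
  linarith [h1, h2]

/-- For a centered Gaussian `G` with variance `γ²`,
`E[erf(t + G)] = erf(t / √(1 + 2γ²))`. -/
theorem stmt16 (γ t : ℝ) (hγ : 0 < γ)
    {Ω : Type*} [MeasurableSpace Ω] (P : Measure Ω) [IsProbabilityMeasure P]
    (G : Ω → ℝ) (hGmeas : Measurable G)
    (hG : Measure.map G P = gaussianReal 0 (γ ^ 2).toNNReal) :
    ∫ ω, erf (t + G ω) ∂P = erf (t / Real.sqrt (1 + 2 * γ ^ 2)) := by
  set v : ℝ≥0 := (γ ^ 2).toNNReal with hv_def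
  have hv : v ≠ 0 := by
    simp only [hv_def, ne_eq, Real.toNNReal_eq_zero, not_le]
    positivity
  have hvr : (v : ℝ) = γ ^ 2 := Real.coe_toNNReal _ (sq_nonneg γ)
  set μ := gaussianReal 0 v with hμ_def
  have hmapped : ∫ ω, erf (t + G ω) ∂P = ∫ x, erf (t + x) ∂μ := by
    have hmeas : AEStronglyMeasurable (fun x : ℝ => erf (t + x)) (Measure.map G P) :=
      (continuous_erf.comp (continuous_const.add continuous_id)).aestronglyMeasurable
    rw [← hG, integral_map hGmeas.aemeasurable hmeas]
  set s := Real.sqrt (1 + 2 * γ ^ 2) with hs_def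
  have hpos : (0:ℝ) < 1 + 2 * γ ^ 2 := by positivity
  have hs : 0 < s := Real.sqrt_pos.2 hpos
  have hs2 : s ^ 2 = 1 + 2 * γ ^ 2 := Real.sq_sqrt hpos.le
  have hFint : ∀ u : ℝ, ∫ x, 2 / Real.sqrt Real.pi * Real.exp (-(u + x) ^ 2) ∂μ
      = 2 / Real.sqrt Real.pi * (s⁻¹ * Real.exp (-u ^ 2 / (1 + 2 * γ ^ 2))) := by
    intro u
    rw [hμ_def, integral_gaussianReal_expand hv]
    have hptw : ∀ x : ℝ,
        gaussianPDFReal 0 v x * (2 / Real.sqrt Real.pi * Real.exp (-(u + x) ^ 2))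
          = 2 / Real.sqrt Real.pi * (Real.exp (-(u + x) ^ 2) *
              ((Real.sqrt (2 * Real.pi * γ ^ 2))⁻¹ * Real.exp (-x ^ 2 / (2 * γ ^ 2)))) := by
      intro x
      rw [gaussianPDFReal, hvr]
      ring_nf
    simp only [hptw]
    rw [integral_const_mul, gauss_conv (γ ^ 2) u (by positivity)]
  have hf : ∀ u, HasDerivAt (fun u => ∫ x, erf (u + x) ∂μ)
      (2 / Real.sqrt Real.pi * (s⁻¹ * Real.exp (-u ^ 2 / (1 + 2 * γ ^ 2)))) u := fun u => by
    have h := hasDerivAt_int_erf μ u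
    rwa [hFint u] at h
  have hg : ∀ u, HasDerivAt (fun u => erf (u / s))
      (2 / Real.sqrt Real.pi * (s⁻¹ * Real.exp (-u ^ 2 / (1 + 2 * γ ^ 2)))) u := fun u => by
    have h1 := (hasDerivAt_erf (u / s)).comp u ((hasDerivAt_id u).div_const s)
    have h2 : -(u / s) ^ 2 = -u ^ 2 / (1 + 2 * γ ^ 2) := by
      rw [div_pow, hs2]; ring
    rw [h2] at h1
    convert h1 using 1
    · rfl
    · rfl
    · rfl
    · ring
  have hsub : ∀ u, HasDerivAt (fun u => (∫ x, erf (u + x) ∂μ) - erf (u / s)) 0 u := fun u => by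
    have := (hf u).sub (hg u); rw [sub_self] at this; exact this
  have hconst := is_const_of_deriv_eq_zero
    (f := fun u => (∫ x, erf (u + x) ∂μ) - erf (u / s))
    (fun u => (hsub u).differentiableAt) (fun u => (hsub u).deriv) t 0
  simp only [zero_add, zero_div, erf_zero, sub_zero] at hconst
  rw [hμ_def, int_erf_zero v] at hconst
  rw [hmapped]
  linarith [hconst]
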